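/- Let $I \subset R = K[x_1,\ldots,x_n]$ be a square-free monomial ideal, $\ell \ge 1$, and $v \in I^\ell$ a square-free monomial such that $v \in \mathfrak{p}^\ell \setminus \mathfrak{p}^{\ell+1}$ for every $\mathfrak{p} \in \mathrm{Min}(I)$. Then for every $\mathfrak{p} \in \mathrm{Min}(I)$ and every $t > \ell$, one has $(\mathfrak{p}^t : v) = \mathfrak{p}^{t-\ell}$. -/

import Mathlib

open MvPolynomial

/-- A square-free monomial ideal: generated by square-free monomials. -/
def IsSqFreeMonomialIdeal {n : ℕ} {K : Type*} [Field K]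
    (I : Ideal (MvPolynomial (Fin n) K)) : Prop :=
  ∃ S : Set (Fin n →₀ ℕ), (∀ d ∈ S, ∀ i, d i ≤ 1) ∧
    I = Ideal.span ((fun d => (monomial d (1 : K) : MvPolynomial (Fin n) K)) '' S)

namespace Stmt7Aux

variable {n : ℕ} {K : Type*} [Field K]

open Classical in
/-- weighted degree: total degree in the variables from `s`. -/
noncomputable def wdeg (s : Set (Fin n)) (d : Fin n →₀ ℕ) : ℕ :=
  d.sum fun i e => if i ∈ s then e else 0

theorem wdeg_add (s : Set (Fin n)) (d e : Fin n →₀ ℕ) :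
    wdeg s (d + e) = wdeg s d + wdeg s e := by
  classical
  unfold wdeg
  exact Finsupp.sum_add_index' (fun i => by simp) (fun i b c => by split <;> simp)

theorem wdeg_single_mem {s : Set (Fin n)} {i : Fin n} (hi : i ∈ s) (k : ℕ) :
    wdeg s (Finsupp.single i k) = k := by
  unfold wdeg
  rw [Finsupp.sum_single_index]
  · exact if_pos hi
  · exact if_pos hi |>.trans rfl |>.symm ▸ rfl

theorem wdeg_pos_elim {s : Set (Fin n)} {d : Fin n →₀ ℕ} (h : 0 < wdeg s d) :
    ∃ i ∈ s, d i ≠ 0 := by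
  classical
  by_contra hc
  push_neg at hc
  have : wdeg s d = 0 := by
    unfold wdeg
    apply Finset.sum_eq_zero
    intro i hi
    show (if i ∈ s then d i else 0) = 0
    by_cases h : i ∈ s
    · rw [if_pos h]; exact hc i h
    · rw [if_neg h]
  omega

/-- The ideal of polynomials all of whose monomials have `s`-weight at least `k`. -/
noncomputable def J (s : Set (Fin n)) (k : ℕ) : Ideal (MvPolynomial (Fin n) K) where
  carrier := {f | ∀ d ∈ f.support, k ≤ wdeg s d}
  zero_mem' := by intro d hd; simp at hd
  add_mem' := by
    classical
    intro f g hf hg d hd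
    rcases Finset.mem_union.mp (MvPolynomial.support_add hd) with h | h
    exacts [hf d h, hg d h]
  smul_mem' := by
    classical
    intro r f hf d hd
    rw [smul_eq_mul] at hd
    obtain ⟨a, ha, b, hb, rfl⟩ := Finset.mem_add.mp (MvPolynomial.support_mul r f hd)
    calc k ≤ wdeg s b := hf b hb
    _ ≤ wdeg s a + wdeg s b := le_add_self
    _ = wdeg s (a + b) := (wdeg_add s a b).symm

theorem mul_mem_J {s : Set (Fin n)} {a b : ℕ} {f g : MvPolynomial (Fin n) K}
    (hf : f ∈ J s a) (hg : g ∈ J s b) : f * g ∈ J s (a + b) := by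
  classical
  intro d hd
  obtain ⟨x, hx, y, hy, rfl⟩ := Finset.mem_add.mp (MvPolynomial.support_mul f g hd)
  rw [wdeg_add]
  exact add_le_add (hf x hx) (hg y hy)

/-- The prime generated by the variables in `s`. -/
noncomputable def P (s : Set (Fin n)) : Ideal (MvPolynomial (Fin n) K) :=
  Ideal.span (MvPolynomial.X '' s)

theorem pow_le_J (s : Set (Fin n)) (k : ℕ) : (P s : Ideal (MvPolynomial (Fin n) K)) ^ k ≤ J s k := by
  induction k with
  | zero => intro f _ d _; exact Nat.zero_le _
  | succ k ih =>
    rw [pow_succ]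
    apply Ideal.mul_le.mpr
    intro r hr g hg
    have hP1 : (P s : Ideal (MvPolynomial (Fin n) K)) ≤ J s 1 := by
      unfold P
      rw [Ideal.span_le]
      rintro g ⟨i, hi, rfl⟩
      intro d hd
      rw [MvPolynomial.support_X] at hd
      simp only [Finset.mem_singleton] at hd
      subst hd
      rw [wdeg_single_mem hi]
    exact mul_mem_J (ih hr) (hP1 hg)

theorem monomial_mem_pow {s : Set (Fin n)} {d : Fin n →₀ ℕ} (c : K) {k : ℕ}
    (h : k ≤ wdeg s d) : monomial d c ∈ (P s : Ideal (MvPolynomial (Fin n) K)) ^ k := by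
  induction k generalizing d with
  | zero => simp
  | succ k ih =>
    obtain ⟨i, hi, hdi⟩ := wdeg_pos_elim (s := s) (d := d) (by omega)
    set e : Fin n →₀ ℕ := d - Finsupp.single i 1 with he
    have hde : e + Finsupp.single i 1 = d := by
      ext j
      rcases eq_or_ne j i with rfl | hj
      · simp [he, Finsupp.single_apply]
        omega
      · simp [he, Finsupp.single_apply, Ne.symm hj]
    have hwe : wdeg s d = wdeg s e + 1 := by
      rw [← hde, wdeg_add, wdeg_single_mem hi]
    have hmul : (monomial d c : MvPolynomial (Fin n) K)
        = monomial e c * X i := by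
      rw [MvPolynomial.X, MvPolynomial.monomial_mul, mul_one, hde]
    rw [hmul, pow_succ]
    exact Ideal.mul_mem_mul (ih (by omega)) (Ideal.subset_span ⟨i, hi, rfl⟩)

theorem mem_P_pow_iff {s : Set (Fin n)} {f : MvPolynomial (Fin n) K} {k : ℕ} :
    f ∈ (P s : Ideal (MvPolynomial (Fin n) K)) ^ k ↔ ∀ d ∈ f.support, k ≤ wdeg s d := by
  constructor
  · exact fun h => pow_le_J s k h
  · intro h
    rw [MvPolynomial.as_sum f]
    exact Ideal.sum_mem _ fun d hd => monomial_mem_pow _ (h d hd)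

open Classical in
noncomputable def phi (s : Set (Fin n)) :
    MvPolynomial (Fin n) K →ₐ[K] MvPolynomial (Fin n) K :=
  aeval (fun i => if i ∈ s then 0 else X i)

theorem sub_phi_mem (s : Set (Fin n)) (f : MvPolynomial (Fin n) K) :
    f - phi s f ∈ (P s : Ideal (MvPolynomial (Fin n) K)) := by
  induction f using MvPolynomial.induction_on with
  | C a => simp [phi]
  | add f g hf hg =>
    have := Ideal.add_mem _ hf hg
    rw [map_add]
    convert this using 1
    ring
  | mul_X f i hf =>
    rw [map_mul]
    by_cases hi : i ∈ s
    · have : phi s (X i : MvPolynomial (Fin n) K) = 0 := by simp [phi, hi]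
      rw [this, mul_zero, sub_zero]
      exact Ideal.mul_mem_left _ f (Ideal.subset_span ⟨i, hi, rfl⟩)
    · have : phi s (X i : MvPolynomial (Fin n) K) = X i := by simp [phi, hi]
      rw [this]
      have heq : f * X i - phi s f * X i = (f - phi s f) * X i := by ring
      rw [heq]
      exact Ideal.mul_mem_right _ _ hf

theorem P_isPrime (s : Set (Fin n)) : (P s : Ideal (MvPolynomial (Fin n) K)).IsPrime := by
  have hker : (P s : Ideal (MvPolynomial (Fin n) K)) = RingHom.ker (phi s).toRingHom := by
    apply le_antisymm
    · unfold P
      rw [Ideal.span_le]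
      rintro g ⟨i, hi, rfl⟩
      simp [RingHom.mem_ker, phi, hi]
    · intro f hf
      have h0 : phi s f = 0 := hf
      have := sub_phi_mem s f
      rwa [h0, sub_zero] at this
  rw [hker]
  exact RingHom.ker_isPrime _

theorem minimal_eq {I : Ideal (MvPolynomial (Fin n) K)} (hI : IsSqFreeMonomialIdeal I)
    {p : Ideal (MvPolynomial (Fin n) K)} (hp : p ∈ I.minimalPrimes) :
    p = P {i | (X i : MvPolynomial (Fin n) K) ∈ p} := by
  set s : Set (Fin n) := {i | (X i : MvPolynomial (Fin n) K) ∈ p} with hs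
  have hPle : (P s : Ideal (MvPolynomial (Fin n) K)) ≤ p := by
    unfold P
    rw [Ideal.span_le]
    rintro g ⟨i, hi, rfl⟩
    exact hi
  obtain ⟨S, hSsf, hIS⟩ := hI
  have hIP : I ≤ P s := by
    rw [hIS, Ideal.span_le]
    rintro g ⟨d, hd, rfl⟩
    -- monomial d 1 ∈ p, so some variable of d lies in p
    have hdp : (monomial d (1 : K) : MvPolynomial (Fin n) K) ∈ p := by
      apply hp.1.2
      rw [hIS]
      exact Ideal.subset_span ⟨d, hd, rfl⟩
    have hprod : (monomial d (1 : K) : MvPolynomial (Fin n) K)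
        = ∏ i ∈ d.support, X i ^ d i := by
      rw [MvPolynomial.monomial_eq, map_one, one_mul]
      rfl
    haveI := hp.1.1
    have : ∃ i ∈ d.support, (X i : MvPolynomial (Fin n) K) ^ d i ∈ p := by
      rw [← Ideal.IsPrime.prod_mem_iff, ← hprod]
      exact hdp
    obtain ⟨i, hi, hXi⟩ := this
    have hdi : d i = 1 := by
      have h1 : d i ≤ 1 := hSsf d hd i
      have h2 : d i ≠ 0 := Finsupp.mem_support_iff.mp hi
      omega
    rw [hdi, pow_one] at hXi
    -- now monomial d 1 ∈ P s since wdeg ≥ 1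
    have hw : 1 ≤ wdeg s d := by
      classical
      unfold wdeg Finsupp.sum
      have hle : (if i ∈ s then d i else 0) ≤ ∑ j ∈ d.support, (if j ∈ s then d j else 0) :=
        Finset.single_le_sum (f := fun j => if j ∈ s then d j else 0) (fun j _ => Nat.zero_le _) hi
      rw [if_pos (show i ∈ s from hXi), hdi] at hle
      exact hle
    have := monomial_mem_pow (c := (1:K)) (s := s) hw
    rwa [pow_one] at this
  have := hp.2 ⟨P_isPrime s, hIP⟩ hPle
  exact le_antisymm this hPle

end Stmt7Aux

/-- If `v ∈ I^ℓ` is a square-free monomial with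
`v ∈ 𝔭^ℓ \ 𝔭^{ℓ+1}` for every minimal prime `𝔭` of `I`, then
`(𝔭^t : v) = 𝔭^{t-ℓ}` for every minimal prime `𝔭` and `t > ℓ`. -/
theorem stmt7 {n : ℕ} {K : Type*} [Field K]
    (I : Ideal (MvPolynomial (Fin n) K)) (hI : IsSqFreeMonomialIdeal I)
    (ℓ : ℕ) (hℓ : 1 ≤ ℓ)
    (v : MvPolynomial (Fin n) K)
    (hvmono : ∃ d : Fin n →₀ ℕ, (∀ i, d i ≤ 1) ∧ v = monomial d (1 : K))
    (hv : v ∈ I ^ ℓ)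
    (hmem : ∀ p ∈ I.minimalPrimes, v ∈ p ^ ℓ ∧ v ∉ p ^ (ℓ + 1)) :
    ∀ p ∈ I.minimalPrimes, ∀ t : ℕ, ℓ < t →
      Submodule.colon (p ^ t) (Ideal.span {v}) = p ^ (t - ℓ) := by
  obtain ⟨d, hdsf, rfl⟩ := hvmono
  intro p hp t ht
  have hps := Stmt7Aux.minimal_eq hI hp
  set s : Set (Fin n) := {i | (X i : MvPolynomial (Fin n) K) ∈ p} with hs
  obtain ⟨hv1, hv2⟩ := hmem p hp
  rw [hps] at hv1 hv2 ⊢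
  have hsupp : (monomial d (1 : K) : MvPolynomial (Fin n) K).support = {d} := by
    classical
    rw [MvPolynomial.support_monomial]
    simp
  have h1 : ℓ ≤ Stmt7Aux.wdeg s d :=
    Stmt7Aux.mem_P_pow_iff.mp hv1 d (by rw [hsupp]; exact Finset.mem_singleton_self d)
  have h2 : ¬ (ℓ + 1 ≤ Stmt7Aux.wdeg s d) := by
    intro h
    exact hv2 (Stmt7Aux.mem_P_pow_iff.mpr (fun e he => by
      rw [hsupp, Finset.mem_singleton] at he
      subst he
      exact h))
  have hwd : Stmt7Aux.wdeg s d = ℓ := by omega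
  apply Submodule.ext
  intro f
  rw [Ideal.mem_colon_span_singleton]
  constructor
  · intro h
    rw [Stmt7Aux.mem_P_pow_iff] at h ⊢
    intro e he
    have hmem' : e + d ∈ (f * monomial d (1 : K)).support := by
      rw [MvPolynomial.mem_support_iff, MvPolynomial.coeff_mul_monomial, mul_one]
      exact MvPolynomial.mem_support_iff.mp he
    have := h _ hmem'
    rw [Stmt7Aux.wdeg_add, hwd] at this
    omega
  · intro hf
    have := Ideal.mul_mem_mul hf hv1
    rwa [← pow_add, Nat.sub_add_cancel (le_of_lt ht)] at this
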